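/- For l ∈ {1,2} and every z with Re z ≥ 0: (i) |K_{l,l}(p^α, z)| ≤ (1 − 1/p)^{−1} (α + 1 + (α−1)/p) ≤ 3α + 1 for every prime p and α ≥ 1; (ii) |K_{l,l}(m, z)| ≤ τ(m)² for every positive integer m; (iii) |K_{1,2}(m₁, m₂, z)| ≤ τ(m₁m₂)² whenever m₁, m₂ are coprime with d₂ | m₁ and d₁ | m₂; (iv) |(d/dz) K_{l,l}(m, z)| ≤ τ(m)² log m for every positive integer m, where τ is the number-of-divisors function. -/

import Mathlib

noncomputable section

open Complex Finset MeasureTheory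

namespace EpsteinPaper

/-- `d` is a fundamental discriminant. -/
def IsFundDisc (d : ℤ) : Prop :=
  (d % 4 = 1 ∧ Squarefree d) ∨
  (d % 4 = 0 ∧ Squarefree (d / 4) ∧ (d / 4 % 4 = 2 ∨ d / 4 % 4 = 3))

/-- Generalized binomial coefficient `z choose k`. -/
def gchoose (z : ℂ) (k : ℕ) : ℂ := (∏ i ∈ Finset.range k, (z - (i : ℂ))) / (k.factorial : ℂ)

/-- `τ_k(m)`: the number of ordered `k`-tuples of positive integers with product `m`. -/
def tauk (k m : ℕ) : ℕ := Nat.card {f : Fin k → ℕ // ∏ i, f i = m}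

/-- `τ(m)`: the number of divisors of `m`. -/
def tau (m : ℕ) : ℕ := m.divisors.card

/-- `(m, d^∞)`: the largest divisor of `m` supported on primes dividing `d`. -/
def corad (m d : ℕ) : ℕ :=
  ∏ p ∈ m.primeFactors.filter (fun p => p ∣ d), p ^ (m.factorization p)

/-- `G_N = ∏_{p | N} (1 + p^{-3/4})²`. -/
def GNfac (N : ℕ) : ℝ := ∏ p ∈ N.primeFactors, (1 + (p : ℝ) ^ (-(3 / 4 : ℝ))) ^ 2

/-- The data of the paper: two moduli together with Dirichlet characters on them. -/
structure Ctx where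
  d₁ : ℕ
  d₂ : ℕ
  χ₁ : DirichletCharacter ℂ d₁
  χ₂ : DirichletCharacter ℂ d₂

namespace Ctx

/-- `D = d₁ d₂`. -/
def D (P : Ctx) : ℕ := P.d₁ * P.d₂

/-- Swapping the roles of the two characters. -/
def swap (P : Ctx) : Ctx := ⟨P.d₂, P.d₁, P.χ₂, P.χ₁⟩

/-- The standing hypotheses: `d₁, d₂` are positive and coprime, `-D` is a fundamental
discriminant, and `χ₁, χ₂` are real primitive Dirichlet characters. -/
def Good (P : Ctx) : Prop :=
  0 < P.d₁ ∧ 0 < P.d₂ ∧ Nat.Coprime P.d₁ P.d₂ ∧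
  IsFundDisc (-(P.D : ℤ)) ∧
  P.χ₁.IsPrimitive ∧ P.χ₂.IsPrimitive ∧
  (∀ a : ZMod P.d₁, star (P.χ₁ a) = P.χ₁ a) ∧
  (∀ a : ZMod P.d₂, star (P.χ₂ a) = P.χ₂ a)

/-- `χ_D(n) = χ_{d₁}(n) χ_{d₂}(n)` as a function on `ℕ`. -/
def chiD (P : Ctx) (n : ℕ) : ℂ := P.χ₁ (n : ZMod P.d₁) * P.χ₂ (n : ZMod P.d₂)

/-- `χ_D` as a Dirichlet character modulo `D = d₁ d₂`. -/
def chiDchar (P : Ctx) : DirichletCharacter ℂ (P.d₁ * P.d₂) :=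
  (DirichletCharacter.changeLevel (dvd_mul_right P.d₁ P.d₂) P.χ₁) *
  (DirichletCharacter.changeLevel (dvd_mul_left P.d₂ P.d₁) P.χ₂)

/-- `r(n) = Σ_{ab=n} χ_{d₁}(a) χ_{d₂}(b)`. -/
def r (P : Ctx) (n : ℕ) : ℂ :=
  ∑ p ∈ n.divisorsAntidiagonal, P.χ₁ (p.1 : ZMod P.d₁) * P.χ₂ (p.2 : ZMod P.d₂)

/-- `α` is the multiplicative function whose generating series at each prime `p` is
`((1 - χ_{d₁}(p) x) (1 - χ_{d₂}(p) x))^{1/2}` (principal binomial series); equivalently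
`Σ α(ν) ν^{-s} = (L(s,χ_{d₁}) L(s,χ_{d₂}))^{-1/2}` for `Re s > 1`. -/
def IsAlpha (P : Ctx) (α : ℕ → ℂ) : Prop :=
  α 1 = 1 ∧
  (∀ m n : ℕ, Nat.Coprime m n → α (m * n) = α m * α n) ∧
  (∀ p : ℕ, p.Prime → ∀ k : ℕ, α (p ^ k) =
    ∑ ij ∈ Finset.HasAntidiagonal.antidiagonal k,
      gchoose (1 / 2) ij.1 * (-(P.χ₁ (p : ZMod P.d₁))) ^ ij.1 *
        (gchoose (1 / 2) ij.2 * (-(P.χ₂ (p : ZMod P.d₂))) ^ ij.2))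

end Ctx

/-- The smoothing weight `𝓛(ν)`. -/
def LL (X : ℝ) (ν : ℕ) : ℝ :=
  if (ν : ℝ) < Real.sqrt X then 1
  else if (ν : ℝ) ≤ X then 2 * Real.log (X / (ν : ℝ)) / Real.log X
  else 0

/-- `β(ν) = α(ν) 𝓛(ν)`. -/
def betaf (α : ℕ → ℂ) (X : ℝ) (ν : ℕ) : ℂ := α ν * ((LL X ν : ℝ) : ℂ)

/-- The mollifier `η(s) = Σ_{ν ≤ X} β(ν) ν^{-s}`. -/
def eta (α : ℕ → ℂ) (X : ℝ) (s : ℂ) : ℂ :=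
  ∑ ν ∈ Finset.Icc 1 ⌊X⌋₊, betaf α X ν * (ν : ℂ) ^ (-s)

namespace Ctx

/-- `L(s) = L(s, χ_{d₁}) L(s, χ_{d₂})`. -/
def Lfun (P : Ctx) [NeZero P.d₁] [NeZero P.d₂] (s : ℂ) : ℂ :=
  P.χ₁.LFunction s * P.χ₂.LFunction s

/-- `F(t) = (2π/√D)^{-(1/2+it)} Γ(1/2+it) L(1/2+it) |η(1/2+it)|² e^{(π/2 - 1/T) t}`. -/
def Ffun (P : Ctx) [NeZero P.d₁] [NeZero P.d₂] (α : ℕ → ℂ) (T X : ℝ) (t : ℝ) : ℂ :=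
  (((2 * Real.pi / Real.sqrt (P.D : ℝ) : ℝ)) : ℂ) ^ (-(1 / 2 + Complex.I * (t : ℂ))) *
  Complex.Gamma (1 / 2 + Complex.I * (t : ℂ)) *
  P.Lfun (1 / 2 + Complex.I * (t : ℂ)) *
  ((‖eta α X (1 / 2 + Complex.I * (t : ℂ))‖ ^ 2 : ℝ) : ℂ) *
  ((Real.exp ((Real.pi / 2 - 1 / T) * t) : ℝ) : ℂ)

/-- `I(t, H) = ∫_t^{t+H} F(u) du`. -/
def Ifun (P : Ctx) [NeZero P.d₁] [NeZero P.d₂] (α : ℕ → ℂ) (T X t H : ℝ) : ℂ :=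
  ∫ u in t..(t + H), P.Ffun α T X u

/-- The function `G(y)` (with `δ = 1/T`). -/
def Gfun (P : Ctx) (α : ℕ → ℂ) (T X : ℝ) (y : ℝ) : ℝ :=
  (‖(∑ ν₁ ∈ Finset.Icc 1 ⌊X⌋₊, ∑ ν₂ ∈ Finset.Icc 1 ⌊X⌋₊,
    betaf α X ν₁ * betaf α X ν₂ / (ν₂ : ℂ) *
    ∑' n : ℕ, P.r n *
      Complex.exp (-(((2 * Real.pi * (n : ℝ) * (ν₁ : ℝ) /
          (Real.sqrt (P.D : ℝ) * (ν₂ : ℝ)) * y : ℝ)) : ℂ) *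
        (((Real.sin (1 / T) : ℝ) : ℂ) + Complex.I * ((Real.cos (1 / T) : ℝ) : ℂ))))‖) ^ 2

/-- `J(x, θ) = ∫_x^∞ G(u) u^{-θ} du`. -/
def Jfun (P : Ctx) (α : ℕ → ℂ) (T X θ x : ℝ) : ℝ :=
  ∫ u in Set.Ioi x, P.Gfun α T X u * u ^ (-θ)

/-- The Euler-factor function `K(m, s)`. -/
def Kf (P : Ctx) (m : ℕ) (s : ℂ) : ℂ :=
  ∏ p ∈ m.primeFactors,
    ((∑' k : ℕ, (P.r (p ^ k)) ^ 2 * (p : ℂ) ^ (-(k : ℂ) * s))⁻¹ *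
     (∑' k : ℕ, P.r (p ^ (m.factorization p + k)) * P.r (p ^ k) * (p : ℂ) ^ (-(k : ℂ) * s)))

/-- `K_{l,l}(m, z)` in its "sum" form (an entire function of `z`); the case `l = 1`.  The case
`l = 2` is obtained by applying this to `P.swap`. -/
def KllS (P : Ctx) (m : ℕ) (z : ℂ) : ℂ :=
  ((corad m P.d₁ : ℕ) : ℂ) ^ (-z) *
  P.χ₁ ((corad m P.d₂ : ℕ) : ZMod P.d₁) * P.χ₂ ((corad m P.d₁ : ℕ) : ZMod P.d₂) *
  ∏ p ∈ m.primeFactors.filter (fun p => ¬ p ∣ P.D),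
    (1 + P.chiD p / (p : ℂ))⁻¹ * (P.χ₁ (p : ZMod P.d₁)) ^ (m.factorization p) *
    ((∑ j ∈ Finset.range (m.factorization p + 1), P.chiD (p ^ j) * (p : ℂ) ^ (-(j : ℂ) * z)) -
      (p : ℂ) ^ (-(z + 1)) *
        ∑ j ∈ Finset.range (m.factorization p - 1), P.chiD (p ^ j) * (p : ℂ) ^ (-(j : ℂ) * z))

/-- `K_{l,l}(m, z)` in its original "product" form; the case `l = 1`. -/
def KllP (P : Ctx) (m : ℕ) (z : ℂ) : ℂ :=
  ((corad m P.d₁ : ℕ) : ℂ) ^ (-z) *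
  P.χ₁ ((corad m P.d₂ : ℕ) : ZMod P.d₁) * P.χ₂ ((corad m P.d₁ : ℕ) : ZMod P.d₂) *
  ∏ p ∈ m.primeFactors.filter (fun p => ¬ p ∣ P.D),
    (1 - (p : ℂ) ^ (-(2 : ℂ)))⁻¹ * (1 - P.chiD p * (p : ℂ) ^ (-z))⁻¹ * (1 - P.chiD p / (p : ℂ)) *
    (P.χ₁ (p : ZMod P.d₁)) ^ (m.factorization p) *
    (1 - (p : ℂ) ^ (-(z + 1)) +
      P.chiD (p ^ (m.factorization p + 1)) *
        (p : ℂ) ^ (-((m.factorization p : ℂ) * z + 1)) * (1 - (p : ℂ) ^ (-(z - 1))))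

/-- `K_{l,l}` for `l ∈ {1, 2}` (sum form). -/
def Kl (P : Ctx) (l : Fin 2) : ℕ → ℂ → ℂ :=
  if l = 0 then P.KllS else P.swap.KllS

/-- `K_{1,2}(m₁, m₂, z)`. -/
def K12 (P : Ctx) (m₁ m₂ : ℕ) (z : ℂ) : ℂ :=
  P.χ₁ (m₁ : ZMod P.d₁) * P.χ₂ (m₂ : ZMod P.d₂) *
  (∑ q ∈ (corad (m₁ * m₂ / P.D) P.D).divisors, (q : ℂ) ^ (-z)) *
  ∏ p ∈ (m₁ * m₂).primeFactors.filter (fun p => ¬ p ∣ P.D),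
    (1 + P.chiD p / (p : ℂ))⁻¹ *
    ((∑ j ∈ Finset.range ((m₁ * m₂).factorization p + 1), (p : ℂ) ^ (-(j : ℂ) * z)) -
      P.chiD p * (p : ℂ) ^ (-(z + 1)) *
        ∑ j ∈ Finset.range ((m₁ * m₂).factorization p - 1), (p : ℂ) ^ (-(j : ℂ) * z))

end Ctx

/-- The Gauss sum `G(χ) = Σ_{x mod d} χ(x) e^{2πi x/d}`. -/
def gaussS (d : ℕ) (χ : DirichletCharacter ℂ d) : ℂ :=
  ∑ x ∈ Finset.range d, χ (x : ZMod d) * Complex.exp (2 * (Real.pi : ℂ) * Complex.I * (x : ℂ) / (d : ℂ))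

/-- `χ(x / y)`, with the convention that this is `0` when `y ∤ x`. -/
def chiAt (d : ℕ) (χ : DirichletCharacter ℂ d) (x y : ℕ) : ℂ :=
  if y ∣ x then χ ((x / y : ℕ) : ZMod d) else 0

namespace Ctx

/-- The exponential sum `ε_q(l)`. -/
def epsq (P : Ctx) (m₁ m₂ l q : ℕ) : ℂ :=
  ∑ a ∈ (Finset.range q).filter (fun a => Nat.Coprime a q),
    Complex.exp (-(2 * (Real.pi : ℂ) * Complex.I * (a : ℂ) * (l : ℂ)) / (q : ℂ)) *
    (gaussS P.d₁ P.χ₁ / ((Real.sqrt (P.d₁ : ℝ) : ℝ) : ℂ) *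
        P.χ₁ ((a * (m₁ / Nat.gcd m₁ q) : ℕ) : ZMod P.d₁) *
        chiAt P.d₂ P.χ₂ (q / Nat.gcd q m₁) P.d₁ +
      gaussS P.d₂ P.χ₂ / ((Real.sqrt (P.d₂ : ℝ) : ℝ) : ℂ) *
        P.χ₂ ((a * (m₁ / Nat.gcd m₁ q) : ℕ) : ZMod P.d₂) *
        chiAt P.d₁ P.χ₁ (q / Nat.gcd q m₁) P.d₂) *
    ((starRingEnd ℂ) (gaussS P.d₁ P.χ₁) / ((Real.sqrt (P.d₁ : ℝ) : ℝ) : ℂ) *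
        P.χ₁ ((a * (m₂ / Nat.gcd m₂ q) : ℕ) : ZMod P.d₁) *
        chiAt P.d₂ P.χ₂ (q / Nat.gcd q m₂) P.d₁ +
      (starRingEnd ℂ) (gaussS P.d₂ P.χ₂) / ((Real.sqrt (P.d₂ : ℝ) : ℝ) : ℂ) *
        P.χ₂ ((a * (m₂ / Nat.gcd m₂ q) : ℕ) : ZMod P.d₂) *
        chiAt P.d₁ P.χ₁ (q / Nat.gcd q m₂) P.d₂)

/-- The `q`-th term of the singular series `σ(l, m₁, m₂)`. -/
def sigTerm (P : Ctx) (m₁ m₂ l q : ℕ) : ℂ :=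
  P.epsq m₁ m₂ l q * ((Nat.gcd q (m₁ * m₂) : ℕ) : ℂ) /
    ((q : ℂ) ^ 2 *
      ((Real.sqrt (((P.D / Nat.gcd (q / Nat.gcd q m₁) P.D) *
          (P.D / Nat.gcd (q / Nat.gcd q m₂) P.D) : ℕ) : ℝ) : ℝ) : ℂ))

/-- The singular series `σ(l, m₁, m₂) = Σ_{q ≥ 1} ε_q(l) (q, m₁m₂) / (q² √(r₁ r₂))`. -/
def sigmaS (P : Ctx) (m₁ m₂ l : ℕ) : ℂ :=
  ∑' q : ℕ, if q = 0 then 0 else P.sigTerm m₁ m₂ l q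

/-- The shifted-convolution Dirichlet series `D_{m₁,m₂}(s, l)`. -/
def Dser (P : Ctx) (m₁ m₂ l : ℕ) (s : ℂ) : ℂ :=
  ∑' n : ℕ, (if m₂ ∣ (m₁ * n + l) then P.r ((m₁ * n + l) / m₂) else 0) * P.r n *
    ((m₁ : ℂ) * (n : ℂ) + (l : ℂ) / 2) ^ (-s)

/-- The fourfold Selberg sum `S(z)` built from `K`. -/
def Ssum (P : Ctx) (α : ℕ → ℂ) (X : ℝ) (z : ℂ) : ℂ :=
  ∑ ν₁ ∈ Finset.Icc 1 ⌊X⌋₊, ∑ ν₂ ∈ Finset.Icc 1 ⌊X⌋₊,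
    ∑ ν₃ ∈ Finset.Icc 1 ⌊X⌋₊, ∑ ν₄ ∈ Finset.Icc 1 ⌊X⌋₊,
      betaf α X ν₁ * betaf α X ν₂ * betaf α X ν₃ * betaf α X ν₄ / ((ν₂ : ℂ) * (ν₄ : ℂ)) *
      (((Nat.gcd (ν₁ * ν₄) (ν₂ * ν₃) : ℕ) : ℂ) / ((ν₁ : ℂ) * (ν₃ : ℂ))) ^ ((1 : ℂ) - z) *
      P.Kf ((ν₁ * ν₄) / Nat.gcd (ν₁ * ν₄) (ν₂ * ν₃)) (1 - z) *
      P.Kf ((ν₂ * ν₃) / Nat.gcd (ν₁ * ν₄) (ν₂ * ν₃)) (1 - z)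

/-- The fourfold Selberg sum `S_{l,l}(z)` built from `K_{l,l}`. -/
def Sll (P : Ctx) (α : ℕ → ℂ) (l : Fin 2) (X : ℝ) (z : ℂ) : ℂ :=
  ∑ ν₁ ∈ Finset.Icc 1 ⌊X⌋₊, ∑ ν₂ ∈ Finset.Icc 1 ⌊X⌋₊,
    ∑ ν₃ ∈ Finset.Icc 1 ⌊X⌋₊, ∑ ν₄ ∈ Finset.Icc 1 ⌊X⌋₊,
      betaf α X ν₁ * betaf α X ν₂ * betaf α X ν₃ * betaf α X ν₄ / ((ν₂ : ℂ) * (ν₄ : ℂ)) *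
      (((Nat.gcd (ν₁ * ν₄) (ν₂ * ν₃) : ℕ) : ℂ) / ((ν₁ : ℂ) * (ν₃ : ℂ))) ^ ((1 : ℂ) - z) *
      P.Kl l ((ν₁ * ν₄) / Nat.gcd (ν₁ * ν₄) (ν₂ * ν₃)) z *
      P.Kl l ((ν₂ * ν₃) / Nat.gcd (ν₁ * ν₄) (ν₂ * ν₃)) z

/-- The sum `S_z(X₁, γ, N)` built from `K`. -/
def SzK (P : Ctx) (α : ℕ → ℂ) (X₁ : ℝ) (γ z : ℂ) (N : ℕ) : ℂ :=
  ∑ ν ∈ (Finset.Icc 1 ⌊X₁⌋₊).filter (fun ν => Nat.Coprime ν N),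
    α ν * P.Kf ν (1 - z) * (ν : ℂ) ^ (γ - 1) * ((Real.log (X₁ / (ν : ℝ)) : ℝ) : ℂ)

/-- The sum `S_z^{(l,l)}(X₁, γ, N)` built from `K_{l,l}`. -/
def SzKll (P : Ctx) (α : ℕ → ℂ) (l : Fin 2) (X₁ : ℝ) (γ z : ℂ) (N : ℕ) : ℂ :=
  ∑ ν ∈ (Finset.Icc 1 ⌊X₁⌋₊).filter (fun ν => Nat.Coprime ν N),
    α ν * P.Kl l ν z * (ν : ℂ) ^ (γ - 1) * ((Real.log (X₁ / (ν : ℝ)) : ℝ) : ℂ)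

/-- The number of units in the ring of integers of `ℚ(√-D)`. -/
def unitsD (P : Ctx) : ℝ := if P.D = 3 then 6 else if P.D = 4 then 4 else 2

/-- `h` is the class number of `ℚ(√-D)`, characterized by Dirichlet's class number formula
`L(1, χ_D) = 2 π h / (w √D)`. -/
def IsClassNumber (P : Ctx) [NeZero (P.d₁ * P.d₂)] (h : ℕ) : Prop :=
  DirichletCharacter.LFunction P.chiDchar 1 =
    (((2 * Real.pi * (h : ℝ) / (P.unitsD * Real.sqrt (P.D : ℝ)) : ℝ)) : ℂ)

end Ctx

/-! ### Auxiliary lemmas for `statement_7` -/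

section Statement7Aux

/-- The per-prime bound `(1 - 1/p)⁻¹ (a + 1 + (a-1)/p)`. -/
def Bnd (p a : ℕ) : ℝ := (1 - 1/(p:ℝ))⁻¹ * ((a:ℝ) + 1 + ((a:ℝ) - 1)/(p:ℝ))

lemma two_le_cast {p : ℕ} (hp : p.Prime) : (2:ℝ) ≤ (p:ℝ) := by exact_mod_cast hp.two_le

lemma aux_x {p : ℕ} (hp : p.Prime) :
    0 < 1/(p:ℝ) ∧ 1/(p:ℝ) ≤ 1/2 ∧ (0:ℝ) < 1 - 1/(p:ℝ) := by
  have hp2 : (2:ℝ) ≤ (p:ℝ) := two_le_cast hp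
  have hp0 : (0:ℝ) < p := by linarith
  have h1 : 1/(p:ℝ) ≤ 1/2 := by
    rw [div_le_div_iff₀ hp0 (by norm_num)]; linarith
  exact ⟨by positivity, h1, by linarith [h1]⟩

lemma Bnd_le_lin {p a : ℕ} (hp : p.Prime) (ha : 1 ≤ a) : Bnd p a ≤ 3 * (a:ℝ) + 1 := by
  obtain ⟨hx0, hx2, h1⟩ := aux_x hp
  have ha1 : (1:ℝ) ≤ (a:ℝ) := by exact_mod_cast ha
  rw [Bnd, inv_mul_le_iff₀ h1, div_eq_mul_one_div ((a:ℝ) - 1)]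
  nlinarith

lemma lin_le_sq {a : ℕ} (ha : 1 ≤ a) : 3 * (a:ℝ) + 1 ≤ ((a:ℝ) + 1)^2 := by
  have ha1 : (1:ℝ) ≤ (a:ℝ) := by exact_mod_cast ha
  nlinarith

lemma one_le_Bnd {p a : ℕ} (hp : p.Prime) (ha : 1 ≤ a) : 1 ≤ Bnd p a := by
  obtain ⟨hx0, hx2, h1⟩ := aux_x hp
  have ha1 : (1:ℝ) ≤ (a:ℝ) := by exact_mod_cast ha
  have hA : (1:ℝ) ≤ (1 - 1/(p:ℝ))⁻¹ := (one_le_inv₀ h1).mpr (by linarith)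
  have hM : (1:ℝ) ≤ (a:ℝ) + 1 + ((a:ℝ) - 1)/(p:ℝ) := by
    have hp0 : (0:ℝ) < p := by linarith [two_le_cast hp]
    have : 0 ≤ ((a:ℝ) - 1)/(p:ℝ) := div_nonneg (by linarith) (le_of_lt hp0)
    linarith
  calc (1:ℝ) = 1 * 1 := (one_mul 1).symm
  _ ≤ Bnd p a := mul_le_mul hA hM zero_le_one (by linarith)

lemma Bnd_nonneg {p a : ℕ} (hp : p.Prime) (ha : 1 ≤ a) : 0 ≤ Bnd p a :=
  le_trans zero_le_one (one_le_Bnd hp ha)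

lemma Bnd_le_sq {p a : ℕ} (hp : p.Prime) (ha : 1 ≤ a) : Bnd p a ≤ ((a:ℝ) + 1)^2 :=
  le_trans (Bnd_le_lin hp ha) (lin_le_sq ha)

lemma abs_natCast_cpow_le_one {n : ℕ} (hn : 0 < n) {w : ℂ} (hw : w.re ≤ 0) :
    ‖(n : ℂ) ^ w‖ ≤ 1 := by
  have hpos : (0:ℝ) < (n:ℝ) := by exact_mod_cast hn
  rw [show ((n:ℂ)) = (((n:ℝ)):ℂ) by push_cast; ring,
    Complex.norm_cpow_eq_rpow_re_of_pos hpos]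
  exact Real.rpow_le_one_of_one_le_of_nonpos (by exact_mod_cast hn) hw

lemma abs_natCast_cpow_eq {n : ℕ} (hn : 0 < n) (w : ℂ) :
    ‖(n : ℂ) ^ w‖ = (n:ℝ) ^ w.re := by
  have hpos : (0:ℝ) < (n:ℝ) := by exact_mod_cast hn
  rw [show ((n:ℂ)) = (((n:ℝ)):ℂ) by push_cast; ring,
    Complex.norm_cpow_eq_rpow_re_of_pos hpos]

lemma abs_cpow_neg_add_one_le {p : ℕ} (hp : 0 < p) {z : ℂ} (hz : 0 ≤ z.re) :
    ‖(p:ℂ) ^ (-(z+1))‖ ≤ 1/(p:ℝ) := by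
  rw [abs_natCast_cpow_eq hp]
  have h1 : (1:ℝ) ≤ (p:ℝ) := by exact_mod_cast hp
  have : (-(z+1)).re ≤ -1 := by simp [Complex.add_re]; linarith
  calc (p:ℝ) ^ (-(z+1)).re ≤ (p:ℝ) ^ (-1:ℝ) :=
        Real.rpow_le_rpow_of_exponent_le h1 this
  _ = 1/(p:ℝ) := by rw [Real.rpow_neg_one]; exact (one_div _).symm

lemma re_neg_nat_mul {j : ℕ} {z : ℂ} (hz : 0 ≤ z.re) : (-(j:ℂ) * z).re ≤ 0 := by
  simp [Complex.mul_re]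
  positivity

lemma abs_one_add_inv_le {p : ℕ} (hp : p.Prime) {w : ℂ} (hw : ‖w‖ ≤ 1/(p:ℝ)) :
    ‖(1 + w)⁻¹‖ ≤ (1 - 1/(p:ℝ))⁻¹ := by
  obtain ⟨hx0, hx2, h1⟩ := aux_x hp
  have h2 : 1 - 1/(p:ℝ) ≤ ‖1 + w‖ := by
    have := norm_add_le (1 + w) (-w)
    simp only [add_neg_cancel_right, norm_neg, norm_one] at this
    have h3 : ‖(1:ℂ)‖ ≤ ‖1 + w‖ + ‖w‖ := by simpa using this
    simp only [norm_one] at h3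
    linarith
  rw [norm_inv]
  exact inv_anti₀ h1 h2

lemma hasDerivAt_natCpow (n : ℕ) (hn : 0 < n) {u : ℂ → ℂ} {u' z : ℂ}
    (hu : HasDerivAt u u' z) :
    HasDerivAt (fun w => (n:ℂ) ^ (u w)) (((Real.log n : ℝ):ℂ) * u' * (n:ℂ) ^ (u z)) z := by
  have hne : (n:ℂ) ≠ 0 := Nat.cast_ne_zero.mpr hn.ne'
  have hlog : Complex.log (n:ℂ) = ((Real.log n : ℝ):ℂ) := by
    rw [show ((n:ℂ)) = (((n:ℝ)):ℂ) by push_cast; ring, Complex.ofReal_log (by positivity)]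
  have h := ((hu.mul_const (Complex.log (n:ℂ)))).cexp
  have heq : (fun w => (n:ℂ) ^ (u w)) = fun w => Complex.exp (u w * Complex.log (n:ℂ)) := by
    funext w; rw [Complex.cpow_def_of_ne_zero hne, mul_comm]
  rw [heq]
  refine h.congr_deriv ?_
  rw [Complex.cpow_def_of_ne_zero hne, mul_comm (Complex.log (n:ℂ)) (u z), hlog]
  ring

end Statement7Aux
section Statement7Aux2

open Finset

/-- Generic bound for one Euler factor. -/
lemma abs_factor_le {p a : ℕ} (hp : p.Prime) (ha : 1 ≤ a) {z : ℂ} (hz : 0 ≤ z.re)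
    (u v : ℕ → ℂ) (hu : ∀ j, ‖u j‖ ≤ 1) (hv : ∀ j, ‖v j‖ ≤ 1)
    (C w : ℂ) (hC : ‖C‖ ≤ (1 - 1/(p:ℝ))⁻¹) (hw : ‖w‖ ≤ 1/(p:ℝ)) :
    ‖C * ((∑ j ∈ Finset.range (a+1), u j * (p:ℂ)^(-(j:ℂ)*z)) -
      w * ∑ j ∈ Finset.range (a-1), v j * (p:ℂ)^(-(j:ℂ)*z))‖ ≤ Bnd p a := by
  obtain ⟨hx0, hx2, h1⟩ := aux_x hp
  have hp0 : 0 < p := hp.pos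
  have ha1 : (1:ℝ) ≤ (a:ℝ) := by exact_mod_cast ha
  have hterm : ∀ (e : ℕ → ℂ), (∀ j, ‖e j‖ ≤ 1) → ∀ j,
      ‖e j * (p:ℂ)^(-(j:ℂ)*z)‖ ≤ 1 := by
    intro e he j
    rw [norm_mul]
    exact mul_le_one₀ (he j) (norm_nonneg _)
      (abs_natCast_cpow_le_one hp0 (re_neg_nat_mul hz))
  have hsum : ∀ (k : ℕ) (e : ℕ → ℂ), (∀ j, ‖e j‖ ≤ 1) →
      ‖∑ j ∈ Finset.range k, e j * (p:ℂ)^(-(j:ℂ)*z)‖ ≤ (k:ℝ) := by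
    intro k e he
    calc ‖∑ j ∈ Finset.range k, e j * (p:ℂ)^(-(j:ℂ)*z)‖
        ≤ ∑ j ∈ Finset.range k, ‖e j * (p:ℂ)^(-(j:ℂ)*z)‖ :=
          norm_sum_le _ _
    _ ≤ ∑ _j ∈ Finset.range k, (1:ℝ) := Finset.sum_le_sum fun j _ => hterm e he j
    _ = (k:ℝ) := by simp
  have hS1 := hsum (a+1) u hu
  have hS2 := hsum (a-1) v hv
  have hcast1 : ((a+1 : ℕ):ℝ) = (a:ℝ) + 1 := by push_cast; ring
  have hcast2 : ((a-1 : ℕ):ℝ) = (a:ℝ) - 1 := by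
    rw [Nat.cast_sub ha, Nat.cast_one]
  rw [hcast1] at hS1
  rw [hcast2] at hS2
  have hmain : ‖(∑ j ∈ Finset.range (a+1), u j * (p:ℂ)^(-(j:ℂ)*z)) -
      w * ∑ j ∈ Finset.range (a-1), v j * (p:ℂ)^(-(j:ℂ)*z)‖ ≤
      (a:ℝ) + 1 + ((a:ℝ) - 1)/(p:ℝ) := by
    calc ‖_‖ ≤ ‖∑ j ∈ Finset.range (a+1), u j * (p:ℂ)^(-(j:ℂ)*z)‖ +
        ‖w * ∑ j ∈ Finset.range (a-1), v j * (p:ℂ)^(-(j:ℂ)*z)‖ :=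
          norm_sub_le _ _
    _ ≤ ((a:ℝ) + 1) + (1/(p:ℝ)) * ((a:ℝ) - 1) := by
        refine add_le_add hS1 ?_
        rw [norm_mul]
        exact mul_le_mul hw hS2 (norm_nonneg _) (le_of_lt hx0)
    _ = (a:ℝ) + 1 + ((a:ℝ) - 1)/(p:ℝ) := by ring
  rw [norm_mul, Bnd]
  exact mul_le_mul hC hmain (norm_nonneg _) (by positivity)

/-- Derivative of a finite product, together with a bound. -/
lemma prod_hasDerivAt_bound {ι : Type*} (s : Finset ι) (f : ι → ℂ → ℂ) (f' : ι → ℂ)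
    (B c : ι → ℝ) (z : ℂ)
    (hd : ∀ i ∈ s, HasDerivAt (f i) (f' i) z)
    (hB : ∀ i ∈ s, ‖f i z‖ ≤ B i)
    (hc : ∀ i ∈ s, ‖f' i‖ ≤ B i * c i)
    (hc0 : ∀ i ∈ s, 0 ≤ c i) :
    ∃ g, HasDerivAt (fun w => ∏ i ∈ s, f i w) g z ∧
      ‖g‖ ≤ (∏ i ∈ s, B i) * (∑ i ∈ s, c i) := by
  classical
  induction s using Finset.induction_on with
  | empty =>
      refine ⟨0, ?_, by simp⟩
      simpa using hasDerivAt_const z (1:ℂ)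
  | insert m s hms ih =>
      obtain ⟨g, hg, hgb⟩ := ih (fun i hi => hd i (Finset.mem_insert_of_mem hi))
        (fun i hi => hB i (Finset.mem_insert_of_mem hi))
        (fun i hi => hc i (Finset.mem_insert_of_mem hi))
        (fun i hi => hc0 i (Finset.mem_insert_of_mem hi))
      have hm := Finset.mem_insert_self m s
      have hprod : HasDerivAt (fun w => f m w * ∏ i ∈ s, f i w)
          (f' m * (∏ i ∈ s, f i z) + f m z * g) z := (hd m hm).mul hg
      have hBm : 0 ≤ B m := le_trans (norm_nonneg _) (hB m hm)
      have hBs : ∀ i ∈ s, 0 ≤ B i := fun i hi =>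
        le_trans (norm_nonneg _) (hB i (Finset.mem_insert_of_mem hi))
      have hPB : 0 ≤ ∏ i ∈ s, B i := Finset.prod_nonneg hBs
      have hSc : 0 ≤ ∑ i ∈ s, c i :=
        Finset.sum_nonneg fun i hi => hc0 i (Finset.mem_insert_of_mem hi)
      have hprodB : ‖∏ i ∈ s, f i z‖ ≤ ∏ i ∈ s, B i := by
        rw [norm_prod]
        exact Finset.prod_le_prod (fun i _ => norm_nonneg _)
          (fun i hi => hB i (Finset.mem_insert_of_mem hi))
      refine ⟨_, by rw [show (fun w => ∏ i ∈ insert m s, f i w) =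
        (fun w => f m w * ∏ i ∈ s, f i w) by funext w; rw [Finset.prod_insert hms]]; exact hprod, ?_⟩
      calc ‖f' m * (∏ i ∈ s, f i z) + f m z * g‖
          ≤ ‖f' m‖ * ‖∏ i ∈ s, f i z‖ +
            ‖f m z‖ * ‖g‖ := by
            refine le_trans (norm_add_le _ _) ?_
            rw [norm_mul, norm_mul]
      _ ≤ (B m * c m) * (∏ i ∈ s, B i) + B m * ((∏ i ∈ s, B i) * (∑ i ∈ s, c i)) := by
            refine add_le_add ?_ ?_
            · exact mul_le_mul (hc m hm) hprodB (norm_nonneg _)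
                (mul_nonneg hBm (hc0 m hm))
            · exact mul_le_mul (hB m hm) hgb (norm_nonneg _) hBm
      _ = (∏ i ∈ insert m s, B i) * (∑ i ∈ insert m s, c i) := by
            rw [Finset.prod_insert hms, Finset.sum_insert hms]; ring

end Statement7Aux2
section Statement7Aux3

open Finset

lemma corad_pos (m d : ℕ) : 0 < corad m d := by
  apply Finset.prod_pos
  intro p hp
  exact pow_pos (Nat.prime_of_mem_primeFactors (Finset.mem_filter.1 hp).1).pos _

lemma corad_dvd (m d : ℕ) (hm : m ≠ 0) : corad m d ∣ m := by
  conv_rhs => rw [← Nat.factorization_prod_pow_eq_self hm]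
  rw [Finsupp.prod]
  exact Finset.prod_dvd_prod_of_subset _ _ _ (Finset.filter_subset _ _)

lemma prime_dvd_corad {m d q : ℕ} (hq : q.Prime) (h : q ∣ corad m d) : q ∣ d := by
  obtain ⟨p, hp, hdvd⟩ := hq.prime.exists_mem_finset_dvd h
  have hpf := Finset.mem_filter.1 hp
  have hpp := Nat.prime_of_mem_primeFactors hpf.1
  have : q = p := (Nat.prime_dvd_prime_iff_eq hq hpp).1 (hq.dvd_of_dvd_pow hdvd)
  exact this ▸ hpf.2

lemma abs_chi_le_one {d : ℕ} (χ : DirichletCharacter ℂ d) (x : ZMod d) :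
    ‖χ x‖ ≤ 1 := by
  exact χ.norm_le_one x

lemma abs_chiD_le_one (Q : Ctx) (n : ℕ) : ‖Q.chiD n‖ ≤ 1 := by
  rw [Ctx.chiD, norm_mul]
  exact mul_le_one₀ (abs_chi_le_one _ _) (norm_nonneg _) (abs_chi_le_one _ _)

lemma tau_eq_prod {m : ℕ} (hm : m ≠ 0) :
    tau m = ∏ p ∈ m.primeFactors, (m.factorization p + 1) := by
  rw [tau, Nat.card_divisors hm]

lemma log_nat_eq_sum {m : ℕ} (hm : m ≠ 0) :
    Real.log m = ∑ p ∈ m.primeFactors, (m.factorization p : ℝ) * Real.log p := by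
  conv_lhs => rw [← Nat.factorization_prod_pow_eq_self hm]
  rw [Finsupp.prod]
  push_cast
  rw [Real.log_prod]
  · refine Finset.sum_congr rfl fun p hp => ?_
    rw [Real.log_pow]
  · intro p hp
    have := (Nat.prime_of_mem_primeFactors (by simpa using hp)).pos
    positivity

lemma log_corad_eq_sum (m d : ℕ) :
    Real.log (corad m d) =
      ∑ p ∈ m.primeFactors.filter (fun p => p ∣ d), (m.factorization p : ℝ) * Real.log p := by
  rw [corad]
  push_cast
  rw [Real.log_prod]
  · refine Finset.sum_congr rfl fun p hp => ?_
    rw [Real.log_pow]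
  · intro p hp
    have := (Nat.prime_of_mem_primeFactors (Finset.mem_filter.1 hp).1).pos
    positivity

end Statement7Aux3
section Statement7Aux4

open Finset

lemma one_le_prod_real {ι : Type*} {s : Finset ι} {f : ι → ℝ} (hf : ∀ i ∈ s, 1 ≤ f i) :
    1 ≤ ∏ i ∈ s, f i := by
  calc (1:ℝ) = ∏ _i ∈ s, 1 := by simp
  _ ≤ ∏ i ∈ s, f i := Finset.prod_le_prod (by simp) hf

lemma prod_le_prod_subset_real {ι : Type*} {s t : Finset ι} (h : s ⊆ t) {f : ι → ℝ}
    (hf : ∀ i ∈ t, 1 ≤ f i) : ∏ i ∈ s, f i ≤ ∏ i ∈ t, f i := by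
  classical
  rw [← Finset.prod_sdiff h]
  have h1 : 1 ≤ ∏ i ∈ t \ s, f i :=
    one_le_prod_real fun i hi => hf i (Finset.mem_sdiff.1 hi).1
  have h2 : 0 ≤ ∏ i ∈ s, f i :=
    Finset.prod_nonneg fun i hi => le_trans zero_le_one (hf i (h hi))
  exact le_mul_of_one_le_left h2 h1

lemma fact_pos {m p : ℕ} (hp : p ∈ m.primeFactors) : 1 ≤ m.factorization p := by
  have : p ∈ (m.factorization).support := by rw [Nat.support_factorization]; exact hp
  exact Nat.one_le_iff_ne_zero.2 (Finsupp.mem_support_iff.1 this)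

lemma abs_chiD_div_le (Q : Ctx) {p : ℕ} (hp : p.Prime) :
    ‖Q.chiD p / (p:ℂ)‖ ≤ 1/(p:ℝ) := by
  rw [norm_div, Complex.norm_natCast]
  gcongr
  · exact abs_chiD_le_one Q p

lemma KllS_abs_le (Q : Ctx) {m : ℕ} (hm : m ≠ 0) {z : ℂ} (hz : 0 ≤ z.re) :
    ‖Q.KllS m z‖ ≤ ∏ p ∈ m.primeFactors, Bnd p (m.factorization p) := by
  rw [Ctx.KllS, norm_mul, norm_mul, norm_mul, norm_prod]
  have h1 : ‖((corad m Q.d₁ : ℕ):ℂ) ^ (-z)‖ ≤ 1 :=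
    abs_natCast_cpow_le_one (corad_pos _ _) (by simp only [Complex.neg_re]; linarith)
  have h2 := abs_chi_le_one Q.χ₁ ((corad m Q.d₂ : ℕ) : ZMod Q.d₁)
  have h3 := abs_chi_le_one Q.χ₂ ((corad m Q.d₁ : ℕ) : ZMod Q.d₂)
  have hfac : ∀ p ∈ m.primeFactors.filter (fun p => ¬ p ∣ Q.D),
      ‖(1 + Q.chiD p / (p:ℂ))⁻¹ * (Q.χ₁ (p : ZMod Q.d₁)) ^ (m.factorization p) *
        ((∑ j ∈ Finset.range (m.factorization p + 1), Q.chiD (p ^ j) * (p:ℂ) ^ (-(j:ℂ) * z)) -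
          (p:ℂ) ^ (-(z+1)) *
            ∑ j ∈ Finset.range (m.factorization p - 1), Q.chiD (p ^ j) * (p:ℂ) ^ (-(j:ℂ) * z))‖
        ≤ Bnd p (m.factorization p) := by
    intro p hp
    have hpf := Finset.mem_filter.1 hp
    have hpp := Nat.prime_of_mem_primeFactors hpf.1
    have ha := fact_pos hpf.1
    refine abs_factor_le hpp ha hz _ _ (fun j => abs_chiD_le_one Q _)
      (fun j => abs_chiD_le_one Q _) _ _ ?_ (abs_cpow_neg_add_one_le hpp.pos hz)
    rw [norm_mul, norm_pow]
    calc ‖(1 + Q.chiD p / (p:ℂ))⁻¹‖ * ‖Q.χ₁ (p : ZMod Q.d₁)‖ ^ (m.factorization p)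
        ≤ (1 - 1/(p:ℝ))⁻¹ * 1 := by
          refine mul_le_mul ?_ ?_ (by positivity) ?_
          · exact abs_one_add_inv_le hpp (abs_chiD_div_le Q hpp)
          · exact pow_le_one₀ (norm_nonneg _) (abs_chi_le_one _ _)
          · exact le_of_lt (inv_pos.2 (aux_x hpp).2.2)
    _ = (1 - 1/(p:ℝ))⁻¹ := mul_one _
  have hprod1 : (∏ p ∈ m.primeFactors.filter (fun p => ¬ p ∣ Q.D),
      ‖(1 + Q.chiD p / (p:ℂ))⁻¹ * (Q.χ₁ (p : ZMod Q.d₁)) ^ (m.factorization p) *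
        ((∑ j ∈ Finset.range (m.factorization p + 1), Q.chiD (p ^ j) * (p:ℂ) ^ (-(j:ℂ) * z)) -
          (p:ℂ) ^ (-(z+1)) *
            ∑ j ∈ Finset.range (m.factorization p - 1), Q.chiD (p ^ j) * (p:ℂ) ^ (-(j:ℂ) * z))‖)
      ≤ ∏ p ∈ m.primeFactors.filter (fun p => ¬ p ∣ Q.D), Bnd p (m.factorization p) :=
    Finset.prod_le_prod (fun p _ => norm_nonneg _) hfac
  have hprod2 : (∏ p ∈ m.primeFactors.filter (fun p => ¬ p ∣ Q.D), Bnd p (m.factorization p))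
      ≤ ∏ p ∈ m.primeFactors, Bnd p (m.factorization p) :=
    prod_le_prod_subset_real (Finset.filter_subset _ _)
      (fun p hp => one_le_Bnd (Nat.prime_of_mem_primeFactors hp) (fact_pos hp))
  have hP0 : 0 ≤ ∏ p ∈ m.primeFactors.filter (fun p => ¬ p ∣ Q.D), Bnd p (m.factorization p) :=
    Finset.prod_nonneg fun p hp => Bnd_nonneg
      (Nat.prime_of_mem_primeFactors (Finset.mem_filter.1 hp).1)
      (fact_pos (Finset.mem_filter.1 hp).1)
  have habc : ‖((corad m Q.d₁ : ℕ):ℂ) ^ (-z)‖ *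
      ‖Q.χ₁ ((corad m Q.d₂ : ℕ) : ZMod Q.d₁)‖ *
      ‖Q.χ₂ ((corad m Q.d₁ : ℕ) : ZMod Q.d₂)‖ ≤ 1 := by
    calc _ ≤ 1 * 1 * 1 := mul_le_mul (mul_le_mul h1 h2 (norm_nonneg _) zero_le_one)
          h3 (norm_nonneg _) (by norm_num)
    _ = (1:ℝ) := by norm_num
  calc _ ≤ 1 * ∏ p ∈ m.primeFactors.filter (fun p => ¬ p ∣ Q.D), Bnd p (m.factorization p) :=
        mul_le_mul habc hprod1 (Finset.prod_nonneg fun i _ => norm_nonneg _) zero_le_one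
  _ = ∏ p ∈ m.primeFactors.filter (fun p => ¬ p ∣ Q.D), Bnd p (m.factorization p) := one_mul _
  _ ≤ _ := hprod2

lemma KllS_abs_le_pow (Q : Ctx) {p a : ℕ} (hp : p.Prime) (ha : 1 ≤ a) {z : ℂ} (hz : 0 ≤ z.re) :
    ‖Q.KllS (p^a) z‖ ≤ Bnd p a := by
  have h := KllS_abs_le Q (pow_ne_zero a hp.pos.ne') hz
  rwa [Nat.primeFactors_prime_pow (by omega) hp, Finset.prod_singleton,
    Nat.Prime.factorization_pow hp, Finsupp.single_eq_same] at h

lemma tau_sq_eq (m : ℕ) (hm : m ≠ 0) :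
    (tau m : ℝ)^2 = ∏ p ∈ m.primeFactors, ((m.factorization p : ℝ) + 1)^2 := by
  rw [tau_eq_prod hm]
  push_cast
  rw [← Finset.prod_pow]

lemma KllS_abs_le_tau (Q : Ctx) {m : ℕ} (hm : m ≠ 0) {z : ℂ} (hz : 0 ≤ z.re) :
    ‖Q.KllS m z‖ ≤ (tau m : ℝ)^2 := by
  refine le_trans (KllS_abs_le Q hm hz) ?_
  rw [tau_sq_eq m hm]
  exact Finset.prod_le_prod
    (fun p hp => Bnd_nonneg (Nat.prime_of_mem_primeFactors hp) (fact_pos hp))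
    (fun p hp => Bnd_le_sq (Nat.prime_of_mem_primeFactors hp) (fact_pos hp))

end Statement7Aux4
section Statement7Aux5

open Finset

lemma tau_corad_le {n D : ℕ} (hn : n ≠ 0) (hD : 0 < D) (hDn : D ∣ n) :
    tau (corad (n / D) D) ≤
      ∏ p ∈ n.primeFactors.filter (fun p => p ∣ D), (n.factorization p + 1)^2 := by
  set c := corad (n / D) D with hc
  have hnD : n / D ≠ 0 := (Nat.div_pos (Nat.le_of_dvd (Nat.pos_of_ne_zero hn) hDn) hD).ne'
  have hcdvd : c ∣ n := (corad_dvd _ _ hnD).trans (Nat.div_dvd_of_dvd hDn)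
  have hc0 : c ≠ 0 := (corad_pos _ _).ne'
  have hsub : c.primeFactors ⊆ n.primeFactors.filter (fun p => p ∣ D) := by
    intro p hp
    rw [Finset.mem_filter]
    constructor
    · exact Nat.mem_primeFactors.2 ⟨Nat.prime_of_mem_primeFactors hp,
        (Nat.dvd_of_mem_primeFactors hp).trans hcdvd, hn⟩
    · exact prime_dvd_corad (Nat.prime_of_mem_primeFactors hp) (Nat.dvd_of_mem_primeFactors hp)
  have hfle : ∀ p, c.factorization p ≤ n.factorization p := by
    intro p
    exact (Nat.factorization_le_iff_dvd hc0 hn).2 hcdvd p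
  calc tau c = ∏ p ∈ c.primeFactors, (c.factorization p + 1) := tau_eq_prod hc0
  _ ≤ ∏ p ∈ c.primeFactors, (n.factorization p + 1)^2 := by
      refine Finset.prod_le_prod' fun p _ => ?_
      calc c.factorization p + 1 ≤ n.factorization p + 1 := by
            exact Nat.add_le_add_right (hfle p) 1
      _ ≤ (n.factorization p + 1)^2 := Nat.le_self_pow two_ne_zero _
  _ ≤ ∏ p ∈ n.primeFactors.filter (fun p => p ∣ D), (n.factorization p + 1)^2 := by
      exact Finset.prod_le_prod_of_subset_of_one_le' hsub
        fun p _ _ => Nat.one_le_pow _ _ (Nat.succ_pos _)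

lemma K12_abs_le (P : Ctx) {m₁ m₂ : ℕ} (h₁ : 0 < m₁) (h₂ : 0 < m₂)
    (hd₂ : P.d₂ ∣ m₁) (hd₁ : P.d₁ ∣ m₂) {z : ℂ} (hz : 0 ≤ z.re) :
    ‖P.K12 m₁ m₂ z‖ ≤ (tau (m₁ * m₂) : ℝ)^2 := by
  set n := m₁ * m₂ with hn
  have hn0 : n ≠ 0 := Nat.mul_ne_zero h₁.ne' h₂.ne'
  have hD0 : 0 < P.D := by
    rw [Ctx.D]
    exact Nat.mul_pos (Nat.pos_of_dvd_of_pos hd₁ h₂) (Nat.pos_of_dvd_of_pos hd₂ h₁)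
  have hDn : P.D ∣ n := by
    rw [Ctx.D, hn, mul_comm m₁ m₂]
    exact mul_dvd_mul hd₁ hd₂
  rw [Ctx.K12, norm_mul, norm_mul, norm_mul]
  -- bound for the character values
  have h1 := abs_chi_le_one P.χ₁ ((m₁ : ℕ) : ZMod P.d₁)
  have h2 := abs_chi_le_one P.χ₂ ((m₂ : ℕ) : ZMod P.d₂)
  -- bound for the q-sum
  have hq : ‖∑ q ∈ (corad (n / P.D) P.D).divisors, (q:ℂ) ^ (-z)‖ ≤
      (tau (corad (n / P.D) P.D) : ℝ) := by
    calc ‖∑ q ∈ (corad (n / P.D) P.D).divisors, (q:ℂ) ^ (-z)‖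
        ≤ ∑ q ∈ (corad (n / P.D) P.D).divisors, ‖(q:ℂ) ^ (-z)‖ :=
          norm_sum_le _ _
    _ ≤ ∑ _q ∈ (corad (n / P.D) P.D).divisors, (1:ℝ) := by
          refine Finset.sum_le_sum fun q hq => ?_
          exact abs_natCast_cpow_le_one (Nat.pos_of_mem_divisors hq)
            (by simp only [Complex.neg_re]; linarith)
    _ = (tau (corad (n / P.D) P.D) : ℝ) := by rw [tau]; simp
  -- bound for the Euler factors
  have hfac : ∀ p ∈ n.primeFactors.filter (fun p => ¬ p ∣ P.D),
      ‖(1 + P.chiD p / (p:ℂ))⁻¹ *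
        ((∑ j ∈ Finset.range (n.factorization p + 1), (p:ℂ) ^ (-(j:ℂ) * z)) -
          P.chiD p * (p:ℂ) ^ (-(z+1)) *
            ∑ j ∈ Finset.range (n.factorization p - 1), (p:ℂ) ^ (-(j:ℂ) * z))‖
        ≤ ((n.factorization p : ℝ) + 1)^2 := by
    intro p hp
    have hpf := Finset.mem_filter.1 hp
    have hpp := Nat.prime_of_mem_primeFactors hpf.1
    have ha := fact_pos hpf.1
    have hrw : ∀ k : ℕ, (∑ j ∈ Finset.range k, (p:ℂ) ^ (-(j:ℂ) * z)) =
        ∑ j ∈ Finset.range k, (fun _ : ℕ => (1:ℂ)) j * (p:ℂ) ^ (-(j:ℂ) * z) := by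
      intro k; simp
    rw [hrw, hrw]
    refine le_trans (abs_factor_le hpp ha hz _ _ (fun _ => by norm_num) (fun _ => by norm_num)
      _ _ (abs_one_add_inv_le hpp (abs_chiD_div_le P hpp)) ?_) (Bnd_le_sq hpp ha)
    rw [norm_mul]
    calc ‖P.chiD p‖ * ‖(p:ℂ) ^ (-(z+1))‖
        ≤ 1 * (1/(p:ℝ)) := mul_le_mul (abs_chiD_le_one P p)
          (abs_cpow_neg_add_one_le hpp.pos hz) (norm_nonneg _) zero_le_one
    _ = 1/(p:ℝ) := one_mul _
  have hprod : ‖∏ p ∈ n.primeFactors.filter (fun p => ¬ p ∣ P.D),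
      ((1 + P.chiD p / (p:ℂ))⁻¹ *
        ((∑ j ∈ Finset.range (n.factorization p + 1), (p:ℂ) ^ (-(j:ℂ) * z)) -
          P.chiD p * (p:ℂ) ^ (-(z+1)) *
            ∑ j ∈ Finset.range (n.factorization p - 1), (p:ℂ) ^ (-(j:ℂ) * z)))‖
      ≤ ∏ p ∈ n.primeFactors.filter (fun p => ¬ p ∣ P.D), ((n.factorization p : ℝ) + 1)^2 := by
    rw [norm_prod]
    exact Finset.prod_le_prod (fun p _ => norm_nonneg _) hfac
  -- combine
  have htc : (tau (corad (n / P.D) P.D) : ℝ) ≤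
      ∏ p ∈ n.primeFactors.filter (fun p => p ∣ P.D), ((n.factorization p : ℝ) + 1)^2 := by
    have := tau_corad_le hn0 hD0 hDn
    calc (tau (corad (n / P.D) P.D) : ℝ)
        ≤ ((∏ p ∈ n.primeFactors.filter (fun p => p ∣ P.D), (n.factorization p + 1)^2 : ℕ) : ℝ) := by
          exact_mod_cast this
    _ = ∏ p ∈ n.primeFactors.filter (fun p => p ∣ P.D), ((n.factorization p : ℝ) + 1)^2 := by
          push_cast; ring
  have hsplit : (∏ p ∈ n.primeFactors.filter (fun p => p ∣ P.D), ((n.factorization p : ℝ) + 1)^2) *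
      (∏ p ∈ n.primeFactors.filter (fun p => ¬ p ∣ P.D), ((n.factorization p : ℝ) + 1)^2) =
      (tau n : ℝ)^2 := by
    rw [Finset.prod_filter_mul_prod_filter_not, tau_sq_eq n hn0]
  have hq0 : (0:ℝ) ≤ tau (corad (n / P.D) P.D) := Nat.cast_nonneg _
  have hp20 : (0:ℝ) ≤ ∏ p ∈ n.primeFactors.filter (fun p => ¬ p ∣ P.D),
      ((n.factorization p : ℝ) + 1)^2 := Finset.prod_nonneg fun p _ => by positivity
  calc ‖P.χ₁ ((m₁ : ℕ) : ZMod P.d₁)‖ * ‖P.χ₂ ((m₂ : ℕ) : ZMod P.d₂)‖ *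
        ‖∑ q ∈ (corad (n / P.D) P.D).divisors, (q:ℂ) ^ (-z)‖ * _
      ≤ 1 * 1 * (tau (corad (n / P.D) P.D) : ℝ) *
        ∏ p ∈ n.primeFactors.filter (fun p => ¬ p ∣ P.D), ((n.factorization p : ℝ) + 1)^2 := by
        refine mul_le_mul (mul_le_mul (mul_le_mul h1 h2 (norm_nonneg _) zero_le_one)
          hq (norm_nonneg _) (by norm_num)) hprod (norm_nonneg _) (by positivity)
  _ = (tau (corad (n / P.D) P.D) : ℝ) *
        ∏ p ∈ n.primeFactors.filter (fun p => ¬ p ∣ P.D), ((n.factorization p : ℝ) + 1)^2 := by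
        ring
  _ ≤ (∏ p ∈ n.primeFactors.filter (fun p => p ∣ P.D), ((n.factorization p : ℝ) + 1)^2) *
        (∏ p ∈ n.primeFactors.filter (fun p => ¬ p ∣ P.D), ((n.factorization p : ℝ) + 1)^2) :=
        mul_le_mul_of_nonneg_right htc hp20
  _ = (tau n : ℝ)^2 := hsplit

end Statement7Aux5
section Statement7Aux6

open Finset

lemma Kll_factor_abs_le (Q : Ctx) {p a : ℕ} (hp : p.Prime) (ha : 1 ≤ a) {z : ℂ}
    (hz : 0 ≤ z.re) :
    ‖(1 + Q.chiD p / (p:ℂ))⁻¹ * (Q.χ₁ (p : ZMod Q.d₁)) ^ a *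
      ((∑ j ∈ Finset.range (a + 1), Q.chiD (p ^ j) * (p:ℂ) ^ (-(j:ℂ) * z)) -
        (p:ℂ) ^ (-(z+1)) * ∑ j ∈ Finset.range (a - 1), Q.chiD (p ^ j) * (p:ℂ) ^ (-(j:ℂ) * z))‖
      ≤ Bnd p a := by
  refine abs_factor_le hp ha hz _ _ (fun j => abs_chiD_le_one Q _)
    (fun j => abs_chiD_le_one Q _) _ _ ?_ (abs_cpow_neg_add_one_le hp.pos hz)
  rw [norm_mul, norm_pow]
  calc ‖(1 + Q.chiD p / (p:ℂ))⁻¹‖ * ‖Q.χ₁ (p : ZMod Q.d₁)‖ ^ a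
      ≤ (1 - 1/(p:ℝ))⁻¹ * 1 := by
        refine mul_le_mul ?_ ?_ (by positivity) ?_
        · exact abs_one_add_inv_le hp (abs_chiD_div_le Q hp)
        · exact pow_le_one₀ (norm_nonneg _) (abs_chi_le_one _ _)
        · exact le_of_lt (inv_pos.2 (aux_x hp).2.2)
  _ = (1 - 1/(p:ℝ))⁻¹ := mul_one _

/-- HasDerivAt for a Dirichlet-polynomial-type sum. -/
lemma hasDerivAt_dsum (Q : Ctx) (p k : ℕ) (hp : 0 < p) (z : ℂ) :
    HasDerivAt (fun w => ∑ j ∈ Finset.range k, Q.chiD (p ^ j) * (p:ℂ) ^ (-(j:ℂ) * w))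
      (∑ j ∈ Finset.range k,
        Q.chiD (p ^ j) * (((Real.log p : ℝ):ℂ) * (-(j:ℂ)) * (p:ℂ) ^ (-(j:ℂ) * z))) z := by
  refine HasDerivAt.fun_sum fun j _ => ?_
  have hu : HasDerivAt (fun w : ℂ => -(j:ℂ) * w) (-(j:ℂ)) z := by
    simpa using (hasDerivAt_id z).const_mul (-(j:ℂ))
  exact (hasDerivAt_natCpow p hp hu).const_mul _

lemma abs_dsum_deriv_le (Q : Ctx) {p : ℕ} (hp : p.Prime) (k a : ℕ) (hk : k ≤ a + 1) {z : ℂ}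
    (hz : 0 ≤ z.re) :
    ‖∑ j ∈ Finset.range k,
        Q.chiD (p ^ j) * (((Real.log p : ℝ):ℂ) * (-(j:ℂ)) * (p:ℂ) ^ (-(j:ℂ) * z))‖
      ≤ (k:ℝ) * ((a:ℝ) * Real.log p) := by
  have hL0 : 0 ≤ Real.log p := Real.log_nonneg (by exact_mod_cast hp.one_lt.le)
  calc ‖∑ j ∈ Finset.range k,
        Q.chiD (p ^ j) * (((Real.log p : ℝ):ℂ) * (-(j:ℂ)) * (p:ℂ) ^ (-(j:ℂ) * z))‖
      ≤ ∑ j ∈ Finset.range k, ‖Q.chiD (p ^ j) * (((Real.log p : ℝ):ℂ) * (-(j:ℂ)) * (p:ℂ) ^ (-(j:ℂ) * z))‖ :=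
        norm_sum_le _ _
  _ ≤ ∑ _j ∈ Finset.range k, (a:ℝ) * Real.log p := by
      refine Finset.sum_le_sum fun j hj => ?_
      have hj' : (j:ℝ) ≤ (a:ℝ) := by
        have : j ≤ a := by
          have := Finset.mem_range.1 hj; omega
        exact_mod_cast this
      rw [norm_mul, norm_mul, norm_mul, Complex.norm_real, Real.norm_eq_abs, norm_neg,
        Complex.norm_natCast, _root_.abs_of_nonneg hL0]
      calc ‖Q.chiD (p ^ j)‖ * (Real.log p * (j:ℝ) *
            ‖(p:ℂ) ^ (-(j:ℂ) * z)‖)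
          ≤ 1 * (Real.log p * (j:ℝ) * 1) := by
            refine mul_le_mul (abs_chiD_le_one Q _) ?_ (by positivity) zero_le_one
            refine mul_le_mul_of_nonneg_left ?_ (by positivity)
            exact abs_natCast_cpow_le_one hp.pos (re_neg_nat_mul hz)
      _ = (j:ℝ) * Real.log p := by ring
      _ ≤ (a:ℝ) * Real.log p := mul_le_mul_of_nonneg_right hj' hL0
  _ = (k:ℝ) * ((a:ℝ) * Real.log p) := by rw [Finset.sum_const, Finset.card_range]; simp

lemma Kll_factor_hasDerivAt (Q : Ctx) {p a : ℕ} (hp : p.Prime) (ha : 1 ≤ a) (z : ℂ)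
    (hz : 0 ≤ z.re) :
    ∃ g, HasDerivAt (fun w => (1 + Q.chiD p / (p:ℂ))⁻¹ * (Q.χ₁ (p : ZMod Q.d₁)) ^ a *
      ((∑ j ∈ Finset.range (a + 1), Q.chiD (p ^ j) * (p:ℂ) ^ (-(j:ℂ) * w)) -
        (p:ℂ) ^ (-(w+1)) * ∑ j ∈ Finset.range (a - 1), Q.chiD (p ^ j) * (p:ℂ) ^ (-(j:ℂ) * w))) g z ∧
      ‖g‖ ≤ ((a:ℝ) + 1)^2 * ((a:ℝ) * Real.log p) := by
  obtain ⟨hx0, hx2, h1x⟩ := aux_x hp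
  have hL0 : 0 ≤ Real.log p := Real.log_nonneg (by exact_mod_cast hp.one_lt.le)
  have ha1 : (1:ℝ) ≤ (a:ℝ) := by exact_mod_cast ha
  have hS1 := hasDerivAt_dsum Q p (a+1) hp.pos z
  have hS2 := hasDerivAt_dsum Q p (a-1) hp.pos z
  have hw : HasDerivAt (fun w : ℂ => (p:ℂ) ^ (-(w+1)))
      (((Real.log p : ℝ):ℂ) * (-1) * (p:ℂ) ^ (-(z+1))) z := by
    have hu : HasDerivAt (fun w : ℂ => -(w+1)) (-1 : ℂ) z := by
      simpa using ((hasDerivAt_id z).add_const (1:ℂ)).fun_neg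
    exact hasDerivAt_natCpow p hp.pos hu
  have hmid := hw.mul hS2
  have htot := (hS1.sub hmid).const_mul ((1 + Q.chiD p / (p:ℂ))⁻¹ * (Q.χ₁ (p : ZMod Q.d₁)) ^ a)
  refine ⟨_, htot, ?_⟩
  -- now bound the derivative value
  have hC : ‖(1 + Q.chiD p / (p:ℂ))⁻¹ * (Q.χ₁ (p : ZMod Q.d₁)) ^ a‖ ≤ 2 := by
    rw [norm_mul, norm_pow]
    calc ‖(1 + Q.chiD p / (p:ℂ))⁻¹‖ * ‖Q.χ₁ (p : ZMod Q.d₁)‖ ^ a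
        ≤ (1 - 1/(p:ℝ))⁻¹ * 1 := mul_le_mul (abs_one_add_inv_le hp (abs_chiD_div_le Q hp))
          (pow_le_one₀ (norm_nonneg _) (abs_chi_le_one _ _)) (by positivity)
          (le_of_lt (inv_pos.2 h1x))
    _ ≤ 2 := by
        rw [mul_one]
        calc (1 - 1/(p:ℝ))⁻¹ ≤ ((1:ℝ)/2)⁻¹ := inv_anti₀ (by norm_num) (by linarith)
        _ = 2 := by norm_num
  have hb1 := abs_dsum_deriv_le Q hp (a+1) a (le_refl _) hz
  have hb2 := abs_dsum_deriv_le Q hp (a-1) a (by omega) hz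
  have hS2z : ‖∑ j ∈ Finset.range (a-1), Q.chiD (p ^ j) * (p:ℂ) ^ (-(j:ℂ) * z)‖
      ≤ (a:ℝ) - 1 := by
    calc ‖∑ j ∈ Finset.range (a-1), Q.chiD (p ^ j) * (p:ℂ) ^ (-(j:ℂ) * z)‖
        ≤ ∑ _j ∈ Finset.range (a-1), (1:ℝ) := by
          refine le_trans (norm_sum_le _ _) (Finset.sum_le_sum fun j _ => ?_)
          rw [norm_mul]
          exact mul_le_one₀ (abs_chiD_le_one Q _) (norm_nonneg _)
            (abs_natCast_cpow_le_one hp.pos (re_neg_nat_mul hz))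
    _ = ((a - 1 : ℕ):ℝ) := by simp
    _ = (a:ℝ) - 1 := by rw [Nat.cast_sub ha, Nat.cast_one]
  have hwv : ‖((Real.log p : ℝ):ℂ) * (-1) * (p:ℂ) ^ (-(z+1))‖ ≤
      Real.log p * (1/(p:ℝ)) := by
    rw [norm_mul, norm_mul, Complex.norm_real, Real.norm_eq_abs, _root_.abs_of_nonneg hL0, norm_neg,
      norm_one, mul_one]
    exact mul_le_mul_of_nonneg_left (abs_cpow_neg_add_one_le hp.pos hz) hL0
  have hpz : ‖(p:ℂ) ^ (-(z+1))‖ ≤ 1/(p:ℝ) := abs_cpow_neg_add_one_le hp.pos hz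
  have hcast1 : ((a+1 : ℕ):ℝ) = (a:ℝ) + 1 := by push_cast; ring
  have hcast2 : ((a-1 : ℕ):ℝ) = (a:ℝ) - 1 := by rw [Nat.cast_sub ha, Nat.cast_one]
  rw [hcast1] at hb1
  rw [hcast2] at hb2
  -- assemble
  rw [norm_mul]
  have hmid_abs : ‖((Real.log p : ℝ):ℂ) * (-1) * (p:ℂ) ^ (-(z+1)) *
      (∑ j ∈ Finset.range (a-1), Q.chiD (p ^ j) * (p:ℂ) ^ (-(j:ℂ) * z)) +
      (p:ℂ) ^ (-(z+1)) * (∑ j ∈ Finset.range (a-1),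
        Q.chiD (p ^ j) * (((Real.log p : ℝ):ℂ) * (-(j:ℂ)) * (p:ℂ) ^ (-(j:ℂ) * z)))‖
      ≤ Real.log p * (1/(p:ℝ)) * ((a:ℝ) - 1) + (1/(p:ℝ)) * (((a:ℝ)-1) * ((a:ℝ) * Real.log p)) := by
    refine le_trans (norm_add_le _ _) (add_le_add ?_ ?_)
    · rw [norm_mul]
      exact mul_le_mul hwv hS2z (norm_nonneg _) (by positivity)
    · rw [norm_mul]
      exact mul_le_mul hpz hb2 (norm_nonneg _) (by positivity)
  have hdiff_abs : ‖(∑ j ∈ Finset.range (a+1),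
      Q.chiD (p ^ j) * (((Real.log p : ℝ):ℂ) * (-(j:ℂ)) * (p:ℂ) ^ (-(j:ℂ) * z))) -
      (((Real.log p : ℝ):ℂ) * (-1) * (p:ℂ) ^ (-(z+1)) *
        (∑ j ∈ Finset.range (a-1), Q.chiD (p ^ j) * (p:ℂ) ^ (-(j:ℂ) * z)) +
        (p:ℂ) ^ (-(z+1)) * (∑ j ∈ Finset.range (a-1),
          Q.chiD (p ^ j) * (((Real.log p : ℝ):ℂ) * (-(j:ℂ)) * (p:ℂ) ^ (-(j:ℂ) * z))))‖
      ≤ ((a:ℝ)+1) * ((a:ℝ) * Real.log p) +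
        (Real.log p * (1/(p:ℝ)) * ((a:ℝ) - 1) + (1/(p:ℝ)) * (((a:ℝ)-1) * ((a:ℝ) * Real.log p))) :=
    le_trans (norm_sub_le _ _) (add_le_add hb1 hmid_abs)
  calc ‖(1 + Q.chiD p / (p:ℂ))⁻¹ * (Q.χ₁ (p : ZMod Q.d₁)) ^ a‖ * ‖_‖
      ≤ 2 * (((a:ℝ)+1) * ((a:ℝ) * Real.log p) +
        (Real.log p * (1/(p:ℝ)) * ((a:ℝ) - 1) + (1/(p:ℝ)) * (((a:ℝ)-1) * ((a:ℝ) * Real.log p)))) :=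
        mul_le_mul hC hdiff_abs (norm_nonneg _) (by norm_num)
  _ ≤ ((a:ℝ) + 1)^2 * ((a:ℝ) * Real.log p) := by
      have hp2 : (2:ℝ) ≤ (p:ℝ) := two_le_cast hp
      have hinv : 1/(p:ℝ) ≤ 1/2 := hx2
      have h1 : Real.log p * (1/(p:ℝ)) * ((a:ℝ) - 1) ≤ Real.log p * (1/2) * ((a:ℝ) - 1) := by
        refine mul_le_mul_of_nonneg_right (mul_le_mul_of_nonneg_left hinv hL0) (by linarith)
      have h2 : (1/(p:ℝ)) * (((a:ℝ)-1) * ((a:ℝ) * Real.log p)) ≤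
          (1/2) * (((a:ℝ)-1) * ((a:ℝ) * Real.log p)) := by
        refine mul_le_mul_of_nonneg_right hinv
          (mul_nonneg (by linarith) (mul_nonneg (by positivity) hL0))
      calc 2 * (((a:ℝ)+1) * ((a:ℝ) * Real.log p) +
          (Real.log p * (1/(p:ℝ)) * ((a:ℝ) - 1) + (1/(p:ℝ)) * (((a:ℝ)-1) * ((a:ℝ) * Real.log p))))
          ≤ 2 * (((a:ℝ)+1) * ((a:ℝ) * Real.log p) +
          (Real.log p * (1/2) * ((a:ℝ) - 1) + (1/2) * (((a:ℝ)-1) * ((a:ℝ) * Real.log p)))) := by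
            linarith
      _ ≤ ((a:ℝ) + 1)^2 * ((a:ℝ) * Real.log p) := by
            nlinarith [mul_nonneg (mul_nonneg hL0 (sq_nonneg ((a:ℝ)-1))) (show (0:ℝ) ≤ (a:ℝ)+1 by linarith)]

end Statement7Aux6
section Statement7Aux7

open Finset

lemma one_le_corad (m d : ℕ) : (1:ℝ) ≤ (corad m d : ℝ) := by
  exact_mod_cast corad_pos m d

lemma KllS_deriv_abs_le (Q : Ctx) {m : ℕ} (hm : m ≠ 0) {z : ℂ} (hz : 0 ≤ z.re) :
    ‖deriv (fun w => Q.KllS m w) z‖ ≤ (tau m : ℝ)^2 * Real.log m := by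
  classical
  set s := m.primeFactors.filter (fun p => ¬ p ∣ Q.D) with hs
  have hps : ∀ p ∈ s, p.Prime ∧ 1 ≤ m.factorization p := fun p hp =>
    ⟨Nat.prime_of_mem_primeFactors (Finset.mem_filter.1 hp).1,
     fact_pos (Finset.mem_filter.1 hp).1⟩
  have H : ∀ p ∈ s, ∃ g, HasDerivAt (fun w =>
      (1 + Q.chiD p / (p:ℂ))⁻¹ * (Q.χ₁ (p : ZMod Q.d₁)) ^ (m.factorization p) *
      ((∑ j ∈ Finset.range (m.factorization p + 1), Q.chiD (p ^ j) * (p:ℂ) ^ (-(j:ℂ) * w)) -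
        (p:ℂ) ^ (-(w+1)) *
          ∑ j ∈ Finset.range (m.factorization p - 1), Q.chiD (p ^ j) * (p:ℂ) ^ (-(j:ℂ) * w))) g z ∧
      ‖g‖ ≤ ((m.factorization p:ℝ) + 1)^2 * ((m.factorization p:ℝ) * Real.log p) :=
    fun p hp => Kll_factor_hasDerivAt Q (hps p hp).1 (hps p hp).2 z hz
  choose! f' hf1 hf2 using H
  obtain ⟨G, hG, hGb⟩ := prod_hasDerivAt_bound s
    (fun p w => (1 + Q.chiD p / (p:ℂ))⁻¹ * (Q.χ₁ (p : ZMod Q.d₁)) ^ (m.factorization p) *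
      ((∑ j ∈ Finset.range (m.factorization p + 1), Q.chiD (p ^ j) * (p:ℂ) ^ (-(j:ℂ) * w)) -
        (p:ℂ) ^ (-(w+1)) *
          ∑ j ∈ Finset.range (m.factorization p - 1), Q.chiD (p ^ j) * (p:ℂ) ^ (-(j:ℂ) * w)))
    f' (fun p => ((m.factorization p:ℝ) + 1)^2)
    (fun p => (m.factorization p:ℝ) * Real.log p) z
    hf1
    (fun p hp => le_trans (Kll_factor_abs_le Q (hps p hp).1 (hps p hp).2 hz)
      (Bnd_le_sq (hps p hp).1 (hps p hp).2))
    hf2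
    (fun p hp => mul_nonneg (Nat.cast_nonneg _)
      (Real.log_nonneg (by exact_mod_cast (hps p hp).1.one_lt.le)))
  -- prefactor
  have h0 : HasDerivAt (fun w : ℂ => ((corad m Q.d₁ : ℕ):ℂ) ^ (-w))
      (((Real.log (corad m Q.d₁) : ℝ):ℂ) * (-1) * ((corad m Q.d₁ : ℕ):ℂ) ^ (-z)) z :=
    hasDerivAt_natCpow _ (corad_pos _ _) (hasDerivAt_id z).neg
  have htot := ((h0.mul_const (Q.χ₁ ((corad m Q.d₂ : ℕ) : ZMod Q.d₁))).mul_const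
    (Q.χ₂ ((corad m Q.d₁ : ℕ) : ZMod Q.d₂))).mul hG
  have hK : HasDerivAt (fun w => Q.KllS m w)
      ((((Real.log (corad m Q.d₁) : ℝ):ℂ) * (-1) * ((corad m Q.d₁ : ℕ):ℂ) ^ (-z) *
          Q.χ₁ ((corad m Q.d₂ : ℕ) : ZMod Q.d₁) * Q.χ₂ ((corad m Q.d₁ : ℕ) : ZMod Q.d₂)) *
        (∏ p ∈ s, ((1 + Q.chiD p / (p:ℂ))⁻¹ * (Q.χ₁ (p : ZMod Q.d₁)) ^ (m.factorization p) *
          ((∑ j ∈ Finset.range (m.factorization p + 1), Q.chiD (p ^ j) * (p:ℂ) ^ (-(j:ℂ) * z)) -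
            (p:ℂ) ^ (-(z+1)) *
              ∑ j ∈ Finset.range (m.factorization p - 1), Q.chiD (p ^ j) * (p:ℂ) ^ (-(j:ℂ) * z)))) +
        (((corad m Q.d₁ : ℕ):ℂ) ^ (-z) * Q.χ₁ ((corad m Q.d₂ : ℕ) : ZMod Q.d₁) *
          Q.χ₂ ((corad m Q.d₁ : ℕ) : ZMod Q.d₂)) * G) z := htot
  rw [hK.deriv]
  -- bounds
  set L := Real.log (corad m Q.d₁) with hL
  have hL0 : 0 ≤ L := Real.log_nonneg (one_le_corad _ _)
  have hlogm0 : 0 ≤ Real.log m := Real.log_nonneg (by exact_mod_cast Nat.one_le_iff_ne_zero.2 hm)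
  have hB0 : ∀ p ∈ s, (0:ℝ) ≤ ((m.factorization p:ℝ) + 1)^2 := fun p _ => by positivity
  have hPB0 : (0:ℝ) ≤ ∏ p ∈ s, ((m.factorization p:ℝ) + 1)^2 := Finset.prod_nonneg hB0
  have hSc0 : (0:ℝ) ≤ ∑ p ∈ s, (m.factorization p:ℝ) * Real.log p :=
    Finset.sum_nonneg fun p hp => mul_nonneg (Nat.cast_nonneg _)
      (Real.log_nonneg (by exact_mod_cast (hps p hp).1.one_lt.le))
  have hprodz : ‖∏ p ∈ s,
      ((1 + Q.chiD p / (p:ℂ))⁻¹ * (Q.χ₁ (p : ZMod Q.d₁)) ^ (m.factorization p) *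
        ((∑ j ∈ Finset.range (m.factorization p + 1), Q.chiD (p ^ j) * (p:ℂ) ^ (-(j:ℂ) * z)) -
          (p:ℂ) ^ (-(z+1)) *
            ∑ j ∈ Finset.range (m.factorization p - 1), Q.chiD (p ^ j) * (p:ℂ) ^ (-(j:ℂ) * z)))‖
      ≤ ∏ p ∈ s, ((m.factorization p:ℝ) + 1)^2 := by
    rw [norm_prod]
    exact Finset.prod_le_prod (fun p _ => norm_nonneg _)
      (fun p hp => le_trans (Kll_factor_abs_le Q (hps p hp).1 (hps p hp).2 hz)
        (Bnd_le_sq (hps p hp).1 (hps p hp).2))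
  have hD0abs : ‖((Real.log (corad m Q.d₁) : ℝ):ℂ) * (-1) *
      ((corad m Q.d₁ : ℕ):ℂ) ^ (-z)‖ ≤ L := by
    rw [norm_mul, norm_mul, Complex.norm_real, Real.norm_eq_abs, _root_.abs_of_nonneg hL0, norm_neg,
      norm_one, mul_one]
    exact mul_le_of_le_one_right hL0
      (abs_natCast_cpow_le_one (corad_pos _ _) (by simp only [Complex.neg_re]; linarith))
  have hpref : ‖((corad m Q.d₁ : ℕ):ℂ) ^ (-z) *
      Q.χ₁ ((corad m Q.d₂ : ℕ) : ZMod Q.d₁) * Q.χ₂ ((corad m Q.d₁ : ℕ) : ZMod Q.d₂)‖ ≤ 1 := by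
    rw [norm_mul, norm_mul]
    refine le_trans (mul_le_of_le_one_right
      (mul_nonneg (norm_nonneg _) (norm_nonneg _)) (abs_chi_le_one _ _)) ?_
    refine le_trans (mul_le_of_le_one_right (norm_nonneg _) (abs_chi_le_one _ _)) ?_
    exact abs_natCast_cpow_le_one (corad_pos _ _) (by simp only [Complex.neg_re]; linarith)
  have hT1 : ‖(((Real.log (corad m Q.d₁) : ℝ):ℂ) * (-1) *
      ((corad m Q.d₁ : ℕ):ℂ) ^ (-z) * Q.χ₁ ((corad m Q.d₂ : ℕ) : ZMod Q.d₁) *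
      Q.χ₂ ((corad m Q.d₁ : ℕ) : ZMod Q.d₂)) *
      (∏ p ∈ s, ((1 + Q.chiD p / (p:ℂ))⁻¹ * (Q.χ₁ (p : ZMod Q.d₁)) ^ (m.factorization p) *
        ((∑ j ∈ Finset.range (m.factorization p + 1), Q.chiD (p ^ j) * (p:ℂ) ^ (-(j:ℂ) * z)) -
          (p:ℂ) ^ (-(z+1)) *
            ∑ j ∈ Finset.range (m.factorization p - 1), Q.chiD (p ^ j) * (p:ℂ) ^ (-(j:ℂ) * z))))‖
      ≤ L * ∏ p ∈ s, ((m.factorization p:ℝ) + 1)^2 := by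
    rw [norm_mul]
    refine mul_le_mul ?_ hprodz (norm_nonneg _) hL0
    rw [norm_mul, norm_mul]
    refine le_trans (mul_le_of_le_one_right
      (mul_nonneg (norm_nonneg _) (norm_nonneg _)) (abs_chi_le_one _ _)) ?_
    exact le_trans (mul_le_of_le_one_right (norm_nonneg _) (abs_chi_le_one _ _)) hD0abs
  have hT2 : ‖(((corad m Q.d₁ : ℕ):ℂ) ^ (-z) *
      Q.χ₁ ((corad m Q.d₂ : ℕ) : ZMod Q.d₁) * Q.χ₂ ((corad m Q.d₁ : ℕ) : ZMod Q.d₂)) * G‖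
      ≤ (∏ p ∈ s, ((m.factorization p:ℝ) + 1)^2) * ∑ p ∈ s, (m.factorization p:ℝ) * Real.log p := by
    rw [norm_mul]
    calc _ ≤ 1 * ((∏ p ∈ s, ((m.factorization p:ℝ) + 1)^2) *
          ∑ p ∈ s, (m.factorization p:ℝ) * Real.log p) :=
        mul_le_mul hpref hGb (norm_nonneg _) zero_le_one
    _ = _ := one_mul _
  -- final comparisons
  have hPB_le : (∏ p ∈ s, ((m.factorization p:ℝ) + 1)^2) ≤ (tau m : ℝ)^2 := by
    rw [tau_sq_eq m hm]
    refine prod_le_prod_subset_real (Finset.filter_subset _ _) fun p hp => ?_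
    have h := Nat.cast_nonneg (α := ℝ) (m.factorization p)
    nlinarith
  have hlog_le : L + (∑ p ∈ s, (m.factorization p:ℝ) * Real.log p) ≤ Real.log m := by
    rw [hL, log_corad_eq_sum, log_nat_eq_sum hm, hs]
    have hdisj : Disjoint (m.primeFactors.filter (fun p => p ∣ Q.d₁))
        (m.primeFactors.filter (fun p => ¬ p ∣ Q.D)) := by
      rw [Finset.disjoint_left]
      intro p hp1 hp2
      exact (Finset.mem_filter.1 hp2).2 (Dvd.dvd.mul_right (Finset.mem_filter.1 hp1).2 Q.d₂)
    rw [← Finset.sum_union hdisj]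
    refine Finset.sum_le_sum_of_subset_of_nonneg
      (Finset.union_subset (Finset.filter_subset _ _) (Finset.filter_subset _ _))
      (fun p hp _ => mul_nonneg (Nat.cast_nonneg _)
        (Real.log_nonneg (by exact_mod_cast (Nat.prime_of_mem_primeFactors hp).one_lt.le)))
  calc ‖_‖ ≤ L * (∏ p ∈ s, ((m.factorization p:ℝ) + 1)^2) +
        (∏ p ∈ s, ((m.factorization p:ℝ) + 1)^2) * ∑ p ∈ s, (m.factorization p:ℝ) * Real.log p :=
      le_trans (norm_add_le _ _) (add_le_add hT1 hT2)
  _ = (∏ p ∈ s, ((m.factorization p:ℝ) + 1)^2) *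
        (L + ∑ p ∈ s, (m.factorization p:ℝ) * Real.log p) := by ring
  _ ≤ (tau m : ℝ)^2 * Real.log m :=
      mul_le_mul hPB_le hlog_le (by linarith) (by positivity)

end Statement7Aux7
theorem statement_7 (P : Ctx) (hP : P.Good) :
    ∀ l : Fin 2, ∀ z : ℂ, 0 ≤ z.re →
      (∀ p : ℕ, p.Prime → ∀ a : ℕ, 1 ≤ a →
        ‖P.Kl l (p ^ a) z‖ ≤
          (1 - 1 / (p : ℝ))⁻¹ * ((a : ℝ) + 1 + ((a : ℝ) - 1) / (p : ℝ)) ∧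
        (1 - 1 / (p : ℝ))⁻¹ * ((a : ℝ) + 1 + ((a : ℝ) - 1) / (p : ℝ)) ≤ 3 * (a : ℝ) + 1) ∧
      (∀ m : ℕ, 0 < m → ‖P.Kl l m z‖ ≤ (tau m : ℝ) ^ 2) ∧
      (∀ m₁ m₂ : ℕ, 0 < m₁ → 0 < m₂ → Nat.Coprime m₁ m₂ → P.d₂ ∣ m₁ → P.d₁ ∣ m₂ →
        ‖P.K12 m₁ m₂ z‖ ≤ (tau (m₁ * m₂) : ℝ) ^ 2) ∧
      (∀ m : ℕ, 0 < m →
        ‖deriv (fun w : ℂ => P.Kl l m w) z‖ ≤ (tau m : ℝ) ^ 2 * Real.log m) := by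
  intro l z hz
  have hKl : P.Kl l = if l = 0 then P.KllS else P.swap.KllS := rfl
  refine ⟨?_, ?_, ?_, ?_⟩
  · intro p hp a ha
    constructor
    · rw [hKl]
      split_ifs with h
      · simpa only [Bnd] using KllS_abs_le_pow P hp ha hz
      · simpa only [Bnd] using KllS_abs_le_pow P.swap hp ha hz
    · simpa only [Bnd] using Bnd_le_lin hp ha
  · intro m hm
    rw [hKl]
    split_ifs with h
    · exact KllS_abs_le_tau P hm.ne' hz
    · exact KllS_abs_le_tau P.swap hm.ne' hz
  · intro m₁ m₂ h₁ h₂ hcop hd₂ hd₁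
    exact K12_abs_le P h₁ h₂ hd₂ hd₁ hz
  · intro m hm
    rw [hKl]
    split_ifs with h
    · exact KllS_deriv_abs_le P hm.ne' hz
    · exact KllS_deriv_abs_le P.swap hm.ne' hz

end EpsteinPaper
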